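/- For the formal power series identity over ℚ: 1/(1 - 8x + 4x²) · (1-2x)² - 4x²·((1-2x)/(1-8x+4x²))² / (1 + 4x²·(1/(1-8x+4x²))) = (1-2x)²/(1-8x+8x²). -/

import Mathlib

lemma key_gen (p : Polynomial ℚ) (h : p ≠ 0) :
    (algebraMap (Polynomial ℚ) (RatFunc ℚ)) p ≠ 0 :=
  RatFunc.algebraMap_ne_zero h

lemma key1 : (1 - 8 * RatFunc.X + 4 * RatFunc.X ^ 2 : RatFunc ℚ) ≠ 0 := by
  have h := key_gen (1 - 8 * Polynomial.X + 4 * Polynomial.X ^ 2)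
    (fun hp => by simpa using congrArg (Polynomial.eval 0) hp)
  have he : (algebraMap (Polynomial ℚ) (RatFunc ℚ)) (1 - 8 * Polynomial.X + 4 * Polynomial.X ^ 2)
      = 1 - 8 * RatFunc.X + 4 * RatFunc.X ^ 2 := by
    push_cast [map_add, map_sub, map_mul, map_pow, map_one, map_ofNat, RatFunc.algebraMap_X]
    ring
  rwa [he] at h

lemma key2 : (1 - 8 * RatFunc.X + 8 * RatFunc.X ^ 2 : RatFunc ℚ) ≠ 0 := by
  have h := key_gen (1 - 8 * Polynomial.X + 8 * Polynomial.X ^ 2)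
    (fun hp => by simpa using congrArg (Polynomial.eval 0) hp)
  have he : (algebraMap (Polynomial ℚ) (RatFunc ℚ)) (1 - 8 * Polynomial.X + 8 * Polynomial.X ^ 2)
      = 1 - 8 * RatFunc.X + 8 * RatFunc.X ^ 2 := by
    push_cast [map_add, map_sub, map_mul, map_pow, map_one, map_ofNat, RatFunc.algebraMap_X]
    ring
  rwa [he] at h

/-- The rational function identity
`(1-2x)²/(1-8x+4x²) - 4x²·((1-2x)/(1-8x+4x²))² / (1 + 4x²·(1/(1-8x+4x²)))
 = (1-2x)²/(1-8x+8x²)`,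
i.e. `T(x) = H(x) - 4x²G(x)²/(1 + 4x²F(x))` with `F = 1/(1-8x+4x²)`,
`G = (1-2x)/(1-8x+4x²)`, `H = (1-2x)²/(1-8x+4x²)`. -/
theorem ladder_generating_function_identity :
    (1 / (1 - 8 * RatFunc.X + 4 * RatFunc.X ^ 2)) * (1 - 2 * RatFunc.X) ^ 2 -
      4 * RatFunc.X ^ 2 *
        ((1 - 2 * RatFunc.X) / (1 - 8 * RatFunc.X + 4 * RatFunc.X ^ 2)) ^ 2 /
        (1 + 4 * RatFunc.X ^ 2 * (1 / (1 - 8 * RatFunc.X + 4 * RatFunc.X ^ 2))) =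
      ((1 - 2 * RatFunc.X) ^ 2 / (1 - 8 * RatFunc.X + 8 * RatFunc.X ^ 2)
        : RatFunc ℚ) := by
  have h1 := key1
  have h2 := key2
  have hq : (1 + 4 * RatFunc.X ^ 2 * (1 / (1 - 8 * RatFunc.X + 4 * RatFunc.X ^ 2)) : RatFunc ℚ)
      = (1 - 8 * RatFunc.X + 8 * RatFunc.X ^ 2) / (1 - 8 * RatFunc.X + 4 * RatFunc.X ^ 2) := by
    rw [eq_div_iff h1, add_mul, mul_assoc, one_div, inv_mul_cancel₀ h1]
    ring
  rw [hq]
  rw [div_div_eq_mul_div, div_mul_eq_mul_div]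
  generalize hD : (1 - 8 * RatFunc.X + 4 * RatFunc.X ^ 2 : RatFunc ℚ) = D at *
  generalize hE : (1 - 8 * RatFunc.X + 8 * RatFunc.X ^ 2 : RatFunc ℚ) = E at *
  field_simp
  subst hD hE
  ring
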